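/- Let m ≥ 1 be an integer and ρ > 0. Let d_1, …, d_m : ℝ → ℝ be continuous; set D(t) = diag(d_1(t), …, d_m(t)) and Φ(t) = diag(e^{iρ∫_0^t d_1(s)ds}, …, e^{iρ∫_0^t d_m(s)ds}). Let H : ℝ → M_m(ℝ) be continuous and N : ℝ → M_m(ℂ) be continuously differentiable with: N(t)H(t) = D(t)N(t) for all t; inf_{t∈ℝ} |det N(t)| > 0; sup_{t∈ℝ} ‖N(t)‖ < ∞; and t ↦ ‖N′(t)‖ integrable on ℝ. Set C(t) = Φ(t)^{-1} N′(t) N(t)^{-1} Φ(t). Then t ↦ ‖C(t)‖ is integrable on ℝ, and for every differentiable solution v : ℝ → ℂ^m of v′(t) = i ρ H(t) v(t) there exist vectors α_+, α_- ∈ ℂ^m and differentiable functions ε_+, ε_- : ℝ → ℂ^m such that: v(t) = N(t)^{-1} Φ(t) (α_+ + ε_+(t)) for t > 0 and v(t) = N(t)^{-1} Φ(t) (α_- + ε_-(t)) for t < 0; ε_±(t) → 0 as t → ±∞; and ε_±′(t) = C(t) (α_± + ε_±(t)) for all t. -/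

import Mathlib

open MeasureTheory

/-- The action of an `m × m` complex matrix on `ℂ^m` with the Euclidean norm. -/
noncomputable def matAct {m : ℕ} (A : Matrix (Fin m) (Fin m) ℂ)
    (v : EuclideanSpace ℂ (Fin m)) : EuclideanSpace ℂ (Fin m) :=
  Matrix.toEuclideanLin A v

/-- The operator norm of an `m × m` complex matrix with respect to the Euclidean norm. -/
noncomputable def matOpNorm {m : ℕ} (A : Matrix (Fin m) (Fin m) ℂ) : ℝ :=
  ‖LinearMap.toContinuousLinearMap (Matrix.toEuclideanLin A)‖

namespace AsymAux

variable {m : ℕ}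

lemma matAct_apply (A : Matrix (Fin m) (Fin m) ℂ) (v : EuclideanSpace ℂ (Fin m)) (i : Fin m) :
    matAct A v i = ∑ j, A i j * v j := rfl

lemma norm_matAct_le (A : Matrix (Fin m) (Fin m) ℂ) (v : EuclideanSpace ℂ (Fin m)) :
    ‖matAct A v‖ ≤ matOpNorm A * ‖v‖ :=
  (LinearMap.toContinuousLinearMap (Matrix.toEuclideanLin A)).le_opNorm v

lemma matOpNorm_nonneg (A : Matrix (Fin m) (Fin m) ℂ) : 0 ≤ matOpNorm A := norm_nonneg _

lemma matAct_mul (A B : Matrix (Fin m) (Fin m) ℂ) (v : EuclideanSpace ℂ (Fin m)) :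
    matAct (A * B) v = matAct A (matAct B v) := by
  ext i
  simp only [matAct_apply, Matrix.mul_apply, Finset.sum_mul, Finset.mul_sum]
  rw [Finset.sum_comm]
  congr 1; ext j; congr 1; ext k; ring

lemma matAct_one (v : EuclideanSpace ℂ (Fin m)) : matAct 1 v = v := by
  ext i
  simp [matAct_apply, Matrix.one_apply, Finset.sum_ite_eq]

lemma matOpNorm_le_bound (A : Matrix (Fin m) (Fin m) ℂ) {c : ℝ} (hc : 0 ≤ c)
    (h : ∀ v, ‖matAct A v‖ ≤ c * ‖v‖) : matOpNorm A ≤ c :=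
  ContinuousLinearMap.opNorm_le_bound _ hc h

lemma matOpNorm_mul_le (A B : Matrix (Fin m) (Fin m) ℂ) :
    matOpNorm (A * B) ≤ matOpNorm A * matOpNorm B := by
  refine matOpNorm_le_bound _ (mul_nonneg (matOpNorm_nonneg A) (matOpNorm_nonneg B)) fun v => ?_
  rw [matAct_mul]
  calc ‖matAct A (matAct B v)‖ ≤ matOpNorm A * ‖matAct B v‖ := norm_matAct_le _ _
    _ ≤ matOpNorm A * (matOpNorm B * ‖v‖) :=
        mul_le_mul_of_nonneg_left (norm_matAct_le _ _) (matOpNorm_nonneg A)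
    _ = matOpNorm A * matOpNorm B * ‖v‖ := by ring

lemma norm_coord_le (v : EuclideanSpace ℂ (Fin m)) (i : Fin m) : ‖v i‖ ≤ ‖v‖ := by
  rw [EuclideanSpace.norm_eq]
  have h1 : ‖v i‖^2 ≤ ∑ j, ‖v j‖^2 := by
    have := Finset.single_le_sum (f := fun j => ‖v j‖^2)
      (fun j _ => sq_nonneg _) (Finset.mem_univ i)
    simpa using this
  calc ‖v i‖ = Real.sqrt (‖v i‖^2) := by
        rw [Real.sqrt_sq (norm_nonneg _)]
    _ ≤ Real.sqrt (∑ j, ‖v j‖^2) := Real.sqrt_le_sqrt h1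

lemma matOpNorm_diagonal_le_one (f : Fin m → ℂ) (h : ∀ j, ‖f j‖ ≤ 1) :
    matOpNorm (Matrix.diagonal f) ≤ 1 := by
  refine matOpNorm_le_bound _ zero_le_one fun v => ?_
  rw [one_mul, EuclideanSpace.norm_eq, EuclideanSpace.norm_eq]
  refine Real.sqrt_le_sqrt (Finset.sum_le_sum fun i _ => ?_)
  have : matAct (Matrix.diagonal f) v i = f i * v i := by
    simp [matAct_apply, Matrix.diagonal_apply, Finset.sum_ite_eq, ite_mul]
  rw [this]
  have h2 : ‖f i * v i‖ ≤ ‖v i‖ := by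
    rw [norm_mul]
    calc ‖f i‖ * ‖v i‖ ≤ 1 * ‖v i‖ :=
          mul_le_mul_of_nonneg_right (h i) (norm_nonneg _)
      _ = ‖v i‖ := one_mul _
  exact pow_le_pow_left₀ (norm_nonneg _) h2 2

lemma abs_entry_le_matOpNorm (A : Matrix (Fin m) (Fin m) ℂ) (i j : Fin m) :
    ‖A i j‖ ≤ matOpNorm A := by
  have h1 : matAct A (EuclideanSpace.single j 1) i = A i j := by
    simp [matAct_apply, EuclideanSpace.single_apply]
  calc ‖A i j‖ = ‖matAct A (EuclideanSpace.single j 1) i‖ := by rw [h1]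
    _ ≤ ‖matAct A (EuclideanSpace.single j 1)‖ := norm_coord_le _ _
    _ ≤ matOpNorm A * ‖(EuclideanSpace.single j (1:ℂ) : EuclideanSpace ℂ (Fin m))‖ :=
        norm_matAct_le _ _
    _ = matOpNorm A := by rw [EuclideanSpace.norm_single]; simp

lemma matOpNorm_le_of_entries (A : Matrix (Fin m) (Fin m) ℂ) {c : ℝ} (hc : 0 ≤ c)
    (h : ∀ i j, ‖A i j‖ ≤ c) : matOpNorm A ≤ (m:ℝ) * m * c := by
  refine matOpNorm_le_bound _ (by positivity) fun v => ?_
  have hrow : ∀ i, ‖matAct A v i‖ ≤ m * c * ‖v‖ := by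
    intro i
    rw [matAct_apply]
    calc ‖∑ j, A i j * v j‖ ≤ ∑ j, ‖A i j * v j‖ := norm_sum_le _ _
      _ ≤ ∑ _j : Fin m, c * ‖v‖ := by
          refine Finset.sum_le_sum fun j _ => ?_
          rw [norm_mul]
          exact mul_le_mul (h i j) (norm_coord_le v j) (norm_nonneg _) hc
      _ = m * c * ‖v‖ := by simp [Finset.sum_const, mul_assoc]
  rw [EuclideanSpace.norm_eq]
  calc Real.sqrt (∑ i, ‖matAct A v i‖^2)
      ≤ Real.sqrt (∑ i : Fin m, ((m:ℝ) * c * ‖v‖)^2) := by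
        refine Real.sqrt_le_sqrt (Finset.sum_le_sum fun i _ => ?_)
        exact pow_le_pow_left₀ (norm_nonneg _) (hrow i) 2
    _ = Real.sqrt ((m:ℝ) * ((m:ℝ) * c * ‖v‖)^2) := by
        simp [Finset.sum_const, nsmul_eq_mul]
    _ ≤ Real.sqrt ((m:ℝ)^2 * ((m:ℝ) * c * ‖v‖)^2) := by
        refine Real.sqrt_le_sqrt ?_
        have : (m:ℝ) ≤ (m:ℝ)^2 := by
          rcases Nat.eq_zero_or_pos m with h0|h0
          · simp [h0]
          · have h1 : (1:ℝ) ≤ (m:ℝ) := by exact_mod_cast h0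
            nlinarith
        nlinarith [sq_nonneg ((m:ℝ) * c * ‖v‖)]
    _ = (m:ℝ) * ((m:ℝ) * c * ‖v‖) := by
        rw [← Real.sqrt_mul_self (by positivity : (0:ℝ) ≤ (m:ℝ) * ((m:ℝ)*c*‖v‖))]
        congr 1; ring
    _ = (m:ℝ) * m * c * ‖v‖ := by ring

lemma abs_det_le : ∀ (n : ℕ) (A : Matrix (Fin n) (Fin n) ℂ) (c : ℝ), 0 ≤ c →
    (∀ i j, ‖A i j‖ ≤ c) → ‖A.det‖ ≤ n.factorial * c ^ n := by
  intro n
  induction n with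
  | zero => intro A c hc h; simp [Matrix.det_fin_zero]
  | succ n ih =>
    intro A c hc h
    rw [Matrix.det_succ_row_zero]
    calc ‖∑ j : Fin (n+1), (-1)^(j:ℕ) * A 0 j *
          (A.submatrix Fin.succ j.succAbove).det‖
        ≤ ∑ j : Fin (n+1), ‖(-1)^(j:ℕ) * A 0 j *
          (A.submatrix Fin.succ j.succAbove).det‖ := norm_sum_le _ _
      _ ≤ ∑ _j : Fin (n+1), c * (n.factorial * c ^ n) := by
          refine Finset.sum_le_sum fun j _ => ?_
          rw [norm_mul, norm_mul]
          have h1 : ‖(-1:ℂ)^(j:ℕ)‖ = 1 := by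
            rw [norm_pow]; simp
          rw [h1, one_mul]
          have h2 : ‖(A.submatrix Fin.succ j.succAbove).det‖
              ≤ n.factorial * c ^ n := ih _ c hc (fun i k => h _ _)
          exact mul_le_mul (h 0 j) h2 (norm_nonneg _) hc
      _ = (n+1).factorial * c ^ (n+1) := by
          rw [Finset.sum_const, Finset.card_univ, Fintype.card_fin, nsmul_eq_mul,
            Nat.factorial_succ]
          push_cast
          ring

lemma abs_adjugate_entry_le {n : ℕ} (A : Matrix (Fin n) (Fin n) ℂ) (c : ℝ)
    (h : ∀ i j, ‖A i j‖ ≤ c) (i j : Fin n) :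
    ‖A.adjugate i j‖ ≤ n.factorial * (max c 1) ^ n := by
  rw [Matrix.adjugate_apply]
  refine abs_det_le n _ (max c 1) (le_trans zero_le_one (le_max_right _ _)) ?_
  intro k l
  rw [Matrix.updateRow_apply]
  split
  · rw [Pi.single_apply]
    split
    · simpa using le_max_right c 1
    · simpa using le_trans zero_le_one (le_max_right c 1)
  · exact le_trans (h k l) (le_max_left _ _)

lemma abs_inv_entry_le {n : ℕ} (A : Matrix (Fin n) (Fin n) ℂ) (c ε : ℝ) (hε : 0 < ε)
    (hdet : ε ≤ ‖A.det‖) (h : ∀ i j, ‖A i j‖ ≤ c) (i j : Fin n) :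
    ‖A⁻¹ i j‖ ≤ (n.factorial * (max c 1) ^ n) / ε := by
  rw [Matrix.inv_def, Ring.inverse_eq_inv']
  have h0 : (A.det⁻¹ • A.adjugate) i j = A.det⁻¹ * A.adjugate i j := rfl
  rw [h0, norm_mul, norm_inv]
  rw [div_eq_mul_inv, mul_comm]
  refine mul_le_mul (abs_adjugate_entry_le A c h i j) (inv_anti₀ hε hdet)
    (by positivity) (by positivity)

lemma hasDerivAt_euclidean (f : ℝ → EuclideanSpace ℂ (Fin m))
    (f' : EuclideanSpace ℂ (Fin m)) (t : ℝ) :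
    HasDerivAt f f' t ↔ ∀ i, HasDerivAt (fun s => f s i) (f' i) t := by
  let e : EuclideanSpace ℂ (Fin m) ≃L[ℂ] (Fin m → ℂ) :=
    PiLp.continuousLinearEquiv 2 ℂ (fun _ : Fin m => ℂ)
  let eR : EuclideanSpace ℂ (Fin m) →L[ℝ] (Fin m → ℂ) :=
    (e.toContinuousLinearMap).restrictScalars ℝ
  let eR' : (Fin m → ℂ) →L[ℝ] EuclideanSpace ℂ (Fin m) :=
    (e.symm.toContinuousLinearMap).restrictScalars ℝ
  constructor
  · intro h i
    exact hasDerivAt_pi.mp ((eR.hasFDerivAt).comp_hasDerivAt t h) i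
  · intro h
    have h2 : HasDerivAt (fun s => (fun i => f s i)) (fun i => f' i) t :=
      hasDerivAt_pi.mpr h
    exact (eR'.hasFDerivAt).comp_hasDerivAt t h2

lemma continuous_matOpNorm : Continuous (matOpNorm : Matrix (Fin m) (Fin m) ℂ → ℝ) := by
  let L : Matrix (Fin m) (Fin m) ℂ →ₗ[ℂ]
      (EuclideanSpace ℂ (Fin m) →L[ℂ] EuclideanSpace ℂ (Fin m)) :=
    (LinearMap.toContinuousLinearMap.toLinearMap).comp
      (Matrix.toEuclideanLin.toLinearMap)
  exact continuous_norm.comp L.continuous_of_finiteDimensional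

lemma gronwall_aux {E : Type*} [NormedAddCommGroup E] [NormedSpace ℝ E]
    (w : ℝ → E) (w' : ℝ → E) (g : ℝ → ℝ) (hg : Continuous g)
    (hw : ∀ t, HasDerivAt w (w' t) t) (hb : ∀ t, ‖w' t‖ ≤ g t * ‖w t‖)
    (T : ℝ) (hT : 0 ≤ T) :
    ‖w T‖ ≤ (‖w 0‖ + 1) * Real.exp (∫ s in (0:ℝ)..T, g s) := by
  have hwc : Continuous w := by
    rw [continuous_iff_continuousAt]; exact fun t => (hw t).continuousAt
  have hInt : ∀ t : ℝ, HasDerivAt (fun u => ∫ s in (0:ℝ)..u, g s) (g t) t := by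
    intro t
    exact intervalIntegral.integral_hasDerivAt_right
      (hg.intervalIntegrable _ _) (hg.stronglyMeasurableAtFilter _ _) hg.continuousAt
  have key : ∀ δ : ℝ, 0 < δ →
      ‖w T‖ ≤ (‖w 0‖ + 1) * Real.exp ((∫ s in (0:ℝ)..T, g s) + δ * T) := by
    intro δ hδ
    set Q := ‖w 0‖ + 1 with hQ
    have hQpos : 0 < Q := by positivity
    set B : ℝ → ℝ := fun t => Q * Real.exp ((∫ s in (0:ℝ)..t, g s) + δ * t) with hBdef
    have hBpos : ∀ t, 0 < B t := fun t => by positivity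
    have hBderiv : ∀ t, HasDerivAt B ((g t + δ) * B t) t := by
      intro t
      have h1 : HasDerivAt (fun u => (∫ s in (0:ℝ)..u, g s) + δ * u) (g t + δ) t :=
        (hInt t).add ((hasDerivAt_id t).const_mul δ |>.congr_deriv (mul_one δ))
      have h2 := (h1.exp).const_mul Q
      refine h2.congr_deriv ?_
      show Q * (Real.exp ((∫ s in (0:ℝ)..t, g s) + δ * t) * (g t + δ)) =
        (g t + δ) * (Q * Real.exp ((∫ s in (0:ℝ)..t, g s) + δ * t))
      ring
    have := image_norm_le_of_norm_deriv_right_lt_deriv_boundary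
      (f := w) (f' := w') (a := 0) (b := T)
      (hwc.continuousOn) (fun x _ => (hw x).hasDerivWithinAt)
      (B := B) (B' := fun t => (g t + δ) * B t)
      (by
        have hB0 : B 0 = Q := by simp [hBdef]
        rw [hB0, hQ]; linarith)
      hBderiv
      (fun x _ hx => by
        calc ‖w' x‖ ≤ g x * ‖w x‖ := hb x
          _ = g x * B x := by rw [hx]
          _ < (g x + δ) * B x := by nlinarith [hBpos x])
    exact this (Set.right_mem_Icc.2 hT)
  have hlim : Filter.Tendsto
      (fun δ : ℝ => (‖w 0‖ + 1) * Real.exp ((∫ s in (0:ℝ)..T, g s) + δ * T))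
      (nhdsWithin 0 (Set.Ioi 0)) (nhds ((‖w 0‖ + 1) * Real.exp (∫ s in (0:ℝ)..T, g s))) := by
    have hc : Continuous (fun δ : ℝ =>
        (‖w 0‖ + 1) * Real.exp ((∫ s in (0:ℝ)..T, g s) + δ * T)) := by
      continuity
    have := hc.tendsto 0
    simp only [zero_mul, add_zero] at this
    exact this.mono_left nhdsWithin_le_nhds
  refine ge_of_tendsto hlim ?_
  filter_upwards [self_mem_nhdsWithin] with δ hδ
  exact key δ hδ

end AsymAux

open AsymAux in
/-- Asymptotic integration (Proposition 2.3): with `D(t)` the diagonal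
matrix of the continuous functions `d j`, `Φ(t)` the diagonal oscillatory fundamental
matrix, `N` a uniform diagonalizer of the continuous real family `H` with `‖N'‖`
integrable, and `C(t) = Φ(t)⁻¹ N'(t) N(t)⁻¹ Φ(t)`, the function `t ↦ ‖C(t)‖` is
integrable, and every solution of `v' = i ρ H v` is of the form
`v(t) = N(t)⁻¹ Φ(t) (α_± + ε_±(t))` for `t ≷ 0` with `ε_±(t) → 0` as `t → ±∞` and
`ε_±' = C (α_± + ε_±)`. -/
theorem asymptotic_integration
    (m : ℕ) (hm : 1 ≤ m) (ρ : ℝ) (hρ : 0 < ρ)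
    (d : Fin m → ℝ → ℝ) (hd : ∀ j, Continuous (d j))
    (Φ : ℝ → Matrix (Fin m) (Fin m) ℂ)
    (hΦ : ∀ t, Φ t = Matrix.diagonal fun j =>
      Complex.exp (Complex.I * (ρ : ℂ) * ((∫ s in (0:ℝ)..t, d j s : ℝ) : ℂ)))
    (H : ℝ → Matrix (Fin m) (Fin m) ℝ) (hH : Continuous H)
    (N N' : ℝ → Matrix (Fin m) (Fin m) ℂ)
    (hN : ∀ (t : ℝ) (i j : Fin m), HasDerivAt (fun s => N s i j) (N' t i j) t)
    (hN'cont : Continuous N')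
    (hNH : ∀ t, N t * (H t).map (Complex.ofReal) =
      (Matrix.diagonal fun j => ((d j t : ℝ) : ℂ)) * N t)
    (ε₀ : ℝ) (hε₀ : 0 < ε₀) (hdet : ∀ t, ε₀ ≤ ‖(N t).det‖)
    (B : ℝ) (hB : ∀ t, matOpNorm (N t) ≤ B)
    (hN'int : Integrable (fun t => matOpNorm (N' t)))
    (C : ℝ → Matrix (Fin m) (Fin m) ℂ)
    (hC : ∀ t, C t = (Φ t)⁻¹ * N' t * (N t)⁻¹ * Φ t) :
    Integrable (fun t => matOpNorm (C t)) ∧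
    ∀ v : ℝ → EuclideanSpace ℂ (Fin m),
      (∀ t : ℝ, HasDerivAt v
        ((Complex.I * (ρ : ℂ)) • matAct ((H t).map (Complex.ofReal)) (v t)) t) →
      ∃ (αp αm : EuclideanSpace ℂ (Fin m)) (εp εm : ℝ → EuclideanSpace ℂ (Fin m)),
        (∀ t : ℝ, 0 < t → v t = matAct ((N t)⁻¹ * Φ t) (αp + εp t)) ∧
        (∀ t : ℝ, t < 0 → v t = matAct ((N t)⁻¹ * Φ t) (αm + εm t)) ∧
        Filter.Tendsto εp Filter.atTop (nhds 0) ∧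
        Filter.Tendsto εm Filter.atBot (nhds 0) ∧
        (∀ t : ℝ, HasDerivAt εp (matAct (C t) (αp + εp t)) t) ∧
        (∀ t : ℝ, HasDerivAt εm (matAct (C t) (αm + εm t)) t) := by
  classical
  -- primitives of the characteristic roots
  set F : Fin m → ℝ → ℝ := fun j t => ∫ s in (0:ℝ)..t, d j s with hFdef
  have hF : ∀ j t, HasDerivAt (F j) (d j t) t := fun j t =>
    intervalIntegral.integral_hasDerivAt_right ((hd j).intervalIntegrable _ _)
      ((hd j).stronglyMeasurableAtFilter _ _) (hd j).continuousAt
  have hFcont : ∀ j, Continuous (F j) := fun j => by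
    rw [continuous_iff_continuousAt]; exact fun t => (hF j t).continuousAt
  set φ : Fin m → ℝ → ℂ := fun j t => Complex.exp (Complex.I * ρ * (F j t : ℂ)) with hφdef
  set ψ : Fin m → ℝ → ℂ := fun j t => Complex.exp (-(Complex.I * ρ * (F j t : ℂ))) with hψdef
  have hΦeq : ∀ t, Φ t = Matrix.diagonal fun j => φ j t := fun t => hΦ t
  have hφψ : ∀ j t, φ j t * ψ j t = 1 := by
    intro j t
    rw [hφdef, hψdef, ← Complex.exp_add]
    simp
  have hφd : ∀ j t, HasDerivAt (φ j) (Complex.I * ρ * (d j t) * φ j t) t := by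
    intro j t
    have h1 : HasDerivAt (fun s => ((F j s : ℝ) : ℂ)) ((d j t : ℝ) : ℂ) t :=
      (hF j t).ofReal_comp
    have h2 := (h1.const_mul (Complex.I * ρ)).cexp
    convert h2 using 1
    simp only [hφdef]
    ring
  have hψd : ∀ j t, HasDerivAt (ψ j) (-(Complex.I * ρ * (d j t)) * ψ j t) t := by
    intro j t
    have h1 : HasDerivAt (fun s => ((F j s : ℝ) : ℂ)) ((d j t : ℝ) : ℂ) t :=
      (hF j t).ofReal_comp
    have h2 := ((h1.const_mul (Complex.I * ρ)).neg).cexp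
    refine h2.congr_deriv ?_
    show Complex.exp (-(Complex.I * ρ * (F j t : ℂ))) * -(Complex.I * ρ * (d j t)) =
      -(Complex.I * ρ * (d j t)) * Complex.exp (-(Complex.I * ρ * (F j t : ℂ)))
    ring
  -- the inverse of Φ
  set Φinv : ℝ → Matrix (Fin m) (Fin m) ℂ := fun t => Matrix.diagonal fun j => ψ j t
    with hΦinvdef
  have hΦright : ∀ t, Φ t * Φinv t = 1 := by
    intro t
    rw [hΦeq t, hΦinvdef, Matrix.diagonal_mul_diagonal]
    have : (fun j => φ j t * ψ j t) = fun _ => (1:ℂ) := funext fun j => hφψ j t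
    rw [this, Matrix.diagonal_one]
  have hΦinveq : ∀ t, (Φ t)⁻¹ = Φinv t := fun t => Matrix.inv_eq_right_inv (hΦright t)
  -- invertibility of N
  have hdet0 : ∀ t, (N t).det ≠ 0 := by
    intro t h0
    have := hdet t
    rw [h0] at this
    simp at this
    linarith
  have hNl : ∀ t, (N t)⁻¹ * N t = 1 := fun t =>
    Matrix.nonsing_inv_mul _ (isUnit_iff_ne_zero.mpr (hdet0 t))
  have hCeq : ∀ t, C t = Φinv t * N' t * (N t)⁻¹ * Φ t := by
    intro t
    rw [hC t, hΦinveq t]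
  -- norm bounds
  have hB0 : 0 ≤ B := le_trans (matOpNorm_nonneg (N 0)) (hB 0)
  have hentry : ∀ t i j, ‖N t i j‖ ≤ B := fun t i j =>
    (abs_entry_le_matOpNorm _ i j).trans (hB t)
  set K0 : ℝ := (m.factorial : ℝ) * (max B 1) ^ m / ε₀ with hK0def
  have hK0 : 0 ≤ K0 := by
    rw [hK0def]
    have : (0:ℝ) < max B 1 := lt_of_lt_of_le zero_lt_one (le_max_right _ _)
    positivity
  have hNinvEntry : ∀ t i j, ‖(N t)⁻¹ i j‖ ≤ K0 := fun t i j =>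
    abs_inv_entry_le (N t) B ε₀ hε₀ (hdet t) (hentry t) i j
  set K : ℝ := (m:ℝ) * m * K0 with hKdef
  have hKnn : 0 ≤ K := by rw [hKdef]; positivity
  have hNinvNorm : ∀ t, matOpNorm ((N t)⁻¹) ≤ K := fun t =>
    matOpNorm_le_of_entries _ hK0 (hNinvEntry t)
  have habsφ : ∀ j t, ‖φ j t‖ ≤ 1 := by
    intro j t
    rw [hφdef]
    rw [Complex.norm_exp]
    have : (Complex.I * ρ * ((F j t : ℝ) : ℂ)).re = 0 := by
      simp [Complex.mul_re, Complex.mul_im]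
    rw [this, Real.exp_zero]
  have habsψ : ∀ j t, ‖ψ j t‖ ≤ 1 := by
    intro j t
    rw [hψdef]
    rw [Complex.norm_exp]
    have : (-(Complex.I * ρ * ((F j t : ℝ) : ℂ))).re = 0 := by
      simp [Complex.mul_re, Complex.mul_im]
    rw [this, Real.exp_zero]
  have hΦnorm : ∀ t, matOpNorm (Φ t) ≤ 1 := by
    intro t
    rw [hΦeq t]
    exact matOpNorm_diagonal_le_one _ fun j => habsφ j t
  have hΦinvnorm : ∀ t, matOpNorm (Φinv t) ≤ 1 := by
    intro t
    rw [hΦinvdef]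
    exact matOpNorm_diagonal_le_one _ fun j => habsψ j t
  set g : ℝ → ℝ := fun t => matOpNorm (C t) with hgdef
  have hg0 : ∀ t, 0 ≤ g t := fun t => matOpNorm_nonneg _
  have hgle : ∀ t, g t ≤ K * matOpNorm (N' t) := by
    intro t
    calc g t = matOpNorm (Φinv t * N' t * (N t)⁻¹ * Φ t) := by
          simp only [hgdef]; rw [hCeq t]
      _ ≤ matOpNorm (Φinv t * N' t * (N t)⁻¹) * matOpNorm (Φ t) := matOpNorm_mul_le _ _
      _ ≤ matOpNorm (Φinv t * N' t * (N t)⁻¹) * 1 :=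
          mul_le_mul_of_nonneg_left (hΦnorm t) (matOpNorm_nonneg _)
      _ = matOpNorm (Φinv t * N' t * (N t)⁻¹) := mul_one _
      _ ≤ matOpNorm (Φinv t * N' t) * matOpNorm ((N t)⁻¹) := matOpNorm_mul_le _ _
      _ ≤ matOpNorm (Φinv t * N' t) * K :=
          mul_le_mul_of_nonneg_left (hNinvNorm t) (matOpNorm_nonneg _)
      _ ≤ (matOpNorm (Φinv t) * matOpNorm (N' t)) * K :=
          mul_le_mul_of_nonneg_right (matOpNorm_mul_le _ _) hKnn
      _ ≤ (1 * matOpNorm (N' t)) * K :=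
          mul_le_mul_of_nonneg_right
            (mul_le_mul_of_nonneg_right (hΦinvnorm t) (matOpNorm_nonneg _)) hKnn
      _ = K * matOpNorm (N' t) := by ring
  -- continuity
  have hNcont : Continuous N := by
    refine continuous_matrix fun i j => ?_
    rw [continuous_iff_continuousAt]
    exact fun t => (hN t i j).continuousAt
  have hφcont : ∀ j, Continuous (φ j) := by
    intro j
    rw [hφdef]
    exact Complex.continuous_exp.comp
      (continuous_const.mul (Complex.continuous_ofReal.comp (hFcont j)))
  have hψcont : ∀ j, Continuous (ψ j) := by
    intro j
    rw [hψdef]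
    exact Complex.continuous_exp.comp
      ((continuous_const.mul (Complex.continuous_ofReal.comp (hFcont j))).neg)
  have hdiagcont : ∀ (f : Fin m → ℝ → ℂ), (∀ j, Continuous (f j)) →
      Continuous (fun t => Matrix.diagonal (fun j => f j t)) := by
    intro f hf
    refine continuous_matrix fun i j => ?_
    by_cases hij : i = j
    · subst hij
      simp only [Matrix.diagonal_apply_eq]
      exact hf i
    · simp only [Matrix.diagonal_apply_ne _ hij]
      exact continuous_const
  have hΦcont : Continuous Φ := by
    have : Φ = fun t => Matrix.diagonal fun j => φ j t := funext hΦeq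
    rw [this]
    exact hdiagcont _ hφcont
  have hΦinvcont : Continuous Φinv := hdiagcont _ hψcont
  have hNinvcont : Continuous (fun t => (N t)⁻¹) := by
    have heq : (fun t => (N t)⁻¹) = fun t => ((N t).det)⁻¹ • (N t).adjugate :=
      funext fun t => by rw [Matrix.inv_def, Ring.inverse_eq_inv']
    rw [heq]
    exact (hNcont.matrix_det.inv₀ hdet0).smul hNcont.matrix_adjugate
  have hCcont : Continuous C := by
    have : C = fun t => Φinv t * N' t * (N t)⁻¹ * Φ t := funext hCeq
    rw [this]
    exact ((hΦinvcont.matrix_mul hN'cont).matrix_mul hNinvcont).matrix_mul hΦcont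
  have hgcont : Continuous g := continuous_matOpNorm.comp hCcont
  have hgint : Integrable g := by
    refine (hN'int.const_mul K).mono' hgcont.aestronglyMeasurable (ae_of_all _ fun t => ?_)
    rw [Real.norm_of_nonneg (hg0 t)]
    exact hgle t
  refine ⟨hgint, ?_⟩
  intro v hv
  -- componentwise derivative of v
  have hvc : ∀ t i, HasDerivAt (fun s => v s i)
      (Complex.I * ρ * ∑ k, (H t i k : ℂ) * v t k) t := by
    intro t i
    have h1 := (hasDerivAt_euclidean v _ t).mp (hv t) i
    have h2 : ((Complex.I * (ρ:ℂ)) • matAct ((H t).map (Complex.ofReal)) (v t)) i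
        = Complex.I * ρ * ∑ k, (H t i k : ℂ) * v t k := by
      have : ((Complex.I * (ρ:ℂ)) • matAct ((H t).map (Complex.ofReal)) (v t)) i
          = (Complex.I * (ρ:ℂ)) * (matAct ((H t).map (Complex.ofReal)) (v t)) i := rfl
      rw [this, matAct_apply]
      simp [Matrix.map_apply]
    rw [h2] at h1
    exact h1
  -- the auxiliary function w
  set w : ℝ → EuclideanSpace ℂ (Fin m) := fun t => matAct (Φinv t * N t) (v t) with hwdef
  have hwcomp : ∀ t i, w t i = ψ i t * ∑ k, N t i k * v t k := by
    intro t i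
    simp only [hwdef]
    rw [matAct_apply, Finset.mul_sum]
    refine Finset.sum_congr rfl fun k _ => ?_
    rw [hΦinvdef, Matrix.diagonal_mul, mul_assoc]
  -- derivative of the inner sums
  have hSd : ∀ t i, HasDerivAt (fun s => ∑ k, N s i k * v s k)
      ((∑ k, N' t i k * v t k) + Complex.I * ρ * (d i t) * ∑ k, N t i k * v t k) t := by
    intro t i
    have h1 : HasDerivAt (fun s => ∑ k, N s i k * v s k)
        (∑ k, (N' t i k * v t k + N t i k * (Complex.I * ρ * ∑ l, (H t k l : ℂ) * v t l))) t :=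
      HasDerivAt.fun_sum fun k _ => (hN t i k).fun_mul (hvc t k)
    have key : ∀ l : Fin m, (∑ k, N t i k * (H t k l : ℂ)) = d i t * N t i l := by
      intro l
      have h3 : (N t * (H t).map Complex.ofReal) i l
          = ((Matrix.diagonal fun j => ((d j t : ℝ) : ℂ)) * N t) i l := by rw [hNH t]
      rw [Matrix.diagonal_mul, Matrix.mul_apply] at h3
      simp only [Matrix.map_apply] at h3
      exact h3
    have h4 : (∑ k, (N' t i k * v t k + N t i k * (Complex.I * ρ * ∑ l, (H t k l : ℂ) * v t l)))
        = (∑ k, N' t i k * v t k) + Complex.I * ρ * (d i t) * ∑ k, N t i k * v t k := by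
      rw [Finset.sum_add_distrib]
      congr 1
      calc (∑ k, N t i k * (Complex.I * ρ * ∑ l, (H t k l : ℂ) * v t l))
          = ∑ k, ∑ l, Complex.I * ρ * (N t i k * (H t k l : ℂ) * v t l) := by
            refine Finset.sum_congr rfl fun k _ => ?_
            rw [Finset.mul_sum, Finset.mul_sum]
            refine Finset.sum_congr rfl fun l _ => by ring
        _ = ∑ l, ∑ k, Complex.I * ρ * (N t i k * (H t k l : ℂ) * v t l) := Finset.sum_comm
        _ = ∑ l, Complex.I * ρ * ((∑ k, N t i k * (H t k l : ℂ)) * v t l) := by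
            refine Finset.sum_congr rfl fun l _ => ?_
            simp only [Finset.sum_mul, Finset.mul_sum]
        _ = ∑ l, Complex.I * ρ * (d i t * N t i l * v t l) := by
            refine Finset.sum_congr rfl fun l _ => by rw [key l]
        _ = Complex.I * ρ * (d i t) * ∑ l, N t i l * v t l := by
            rw [Finset.mul_sum]
            refine Finset.sum_congr rfl fun l _ => by ring
    rw [h4] at h1
    exact h1
  -- derivative of w
  have hwd : ∀ t, HasDerivAt w (matAct (Φinv t * N' t) (v t)) t := by
    intro t
    rw [hasDerivAt_euclidean]
    intro i
    have hfun : (fun s => w s i) = fun s => ψ i s * ∑ k, N s i k * v s k :=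
      funext fun s => hwcomp s i
    rw [hfun]
    have hp := (hψd i t).fun_mul (hSd t i)
    have hval : matAct (Φinv t * N' t) (v t) i = ψ i t * ∑ k, N' t i k * v t k := by
      rw [matAct_apply, Finset.mul_sum]
      refine Finset.sum_congr rfl fun k _ => ?_
      rw [hΦinvdef, Matrix.diagonal_mul, mul_assoc]
    rw [hval]
    refine hp.congr_deriv ?_
    ring
  -- matrix identities
  have hABA : ∀ t, matAct ((N t)⁻¹ * Φ t) (w t) = v t := by
    intro t
    rw [hwdef]
    rw [← matAct_mul]
    have hid : ((N t)⁻¹ * Φ t) * (Φinv t * N t) = 1 := by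
      rw [Matrix.mul_assoc, ← Matrix.mul_assoc (Φ t), hΦright t, Matrix.one_mul, hNl t]
    rw [hid, matAct_one]
  have hCw : ∀ t, matAct (C t) (w t) = matAct (Φinv t * N' t) (v t) := by
    intro t
    rw [hwdef, ← matAct_mul]
    congr 1
    rw [hCeq t]
    rw [Matrix.mul_assoc (Φinv t * N' t * (N t)⁻¹), ← Matrix.mul_assoc (Φ t), hΦright t,
      Matrix.one_mul, Matrix.mul_assoc (Φinv t * N' t), hNl t, Matrix.mul_one]
  have hw' : ∀ t, HasDerivAt w (matAct (C t) (w t)) t := by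
    intro t
    rw [hCw t]
    exact hwd t
  have hwc : Continuous w := by
    rw [continuous_iff_continuousAt]
    exact fun t => (hw' t).continuousAt
  -- global bound via Gronwall
  set G : ℝ := ∫ t, g t with hGdef
  have hIle : ∀ a b : ℝ, a ≤ b → (∫ s in a..b, g s) ≤ G := by
    intro a b hab
    rw [intervalIntegral.integral_of_le hab, hGdef]
    exact setIntegral_le_integral hgint (ae_of_all _ hg0)
  set M : ℝ := (‖w 0‖ + 1) * Real.exp G with hMdef
  have hwb : ∀ t, ‖matAct (C t) (w t)‖ ≤ g t * ‖w t‖ := fun t => norm_matAct_le _ _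
  have hM : ∀ t, ‖w t‖ ≤ M := by
    intro t
    rcases le_or_gt 0 t with ht | ht
    · have h1 := gronwall_aux w (fun s => matAct (C s) (w s)) g hgcont hw' hwb t ht
      refine h1.trans ?_
      rw [hMdef]
      have := hIle 0 t ht
      have h2 : Real.exp (∫ s in (0:ℝ)..t, g s) ≤ Real.exp G := Real.exp_le_exp.mpr this
      nlinarith [norm_nonneg (w 0), Real.exp_pos (∫ s in (0:ℝ)..t, g s)]
    · set u : ℝ → EuclideanSpace ℂ (Fin m) := fun s => w (-s) with hudef
      set u' : ℝ → EuclideanSpace ℂ (Fin m) :=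
        fun s => (-1 : ℝ) • matAct (C (-s)) (w (-s)) with hu'def
      have hu : ∀ s, HasDerivAt u (u' s) s := by
        intro s
        have h1 := (hw' (-s)).scomp s (hasDerivAt_neg s)
        exact h1
      have hub : ∀ s, ‖u' s‖ ≤ g (-s) * ‖u s‖ := by
        intro s
        rw [hu'def, norm_smul]
        simp only [norm_neg, norm_one, one_mul]
        calc ‖matAct (C (-s)) (w (-s))‖
            ≤ g (-s) * ‖w (-s)‖ := hwb (-s)
          _ = g (-s) * ‖u s‖ := by rw [hudef]
      have h2 := gronwall_aux u u' (fun s => g (-s)) (hgcont.comp continuous_neg)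
        hu hub (-t) (by linarith)
      have h3 : u (-t) = w t := by rw [hudef]; simp
      have h4 : u 0 = w 0 := by rw [hudef]; simp
      rw [h3, h4] at h2
      refine h2.trans ?_
      have h5 : (∫ s in (0:ℝ)..(-t), g (-s)) = ∫ s in t..(0:ℝ), g s := by
        rw [intervalIntegral.integral_comp_neg]
        norm_num
      rw [h5, hMdef]
      have h6 : Real.exp (∫ s in t..(0:ℝ), g s) ≤ Real.exp G :=
        Real.exp_le_exp.mpr (hIle t 0 (le_of_lt ht))
      nlinarith [norm_nonneg (w 0), Real.exp_pos (∫ s in t..(0:ℝ), g s)]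
  -- integrability of the derivative of w
  set wd : ℝ → EuclideanSpace ℂ (Fin m) := fun t => matAct (C t) (w t) with hwddef
  have hwdcont : Continuous wd := by
    have heq : wd = fun t => (PiLp.continuousLinearEquiv 2 ℂ (fun _ : Fin m => ℂ)).symm
        (fun i => ∑ k, C t i k * w t k) := by
      funext t
      ext i
      simp only [hwddef]
      rw [matAct_apply]
      rfl
    rw [heq]
    refine (PiLp.continuousLinearEquiv 2 ℂ (fun _ : Fin m => ℂ)).symm.continuous.comp ?_
    refine continuous_pi fun i => continuous_finset_sum _ fun k _ => ?_
    refine Continuous.mul ?_ ?_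
    · exact (continuous_apply k).comp ((continuous_apply i).comp hCcont)
    · exact (continuous_apply k).comp
        ((PiLp.continuousLinearEquiv 2 ℂ (fun _ : Fin m => ℂ)).continuous.comp hwc)
  have hwdint : Integrable wd := by
    refine (hgint.const_mul M).mono' hwdcont.aestronglyMeasurable (ae_of_all _ fun t => ?_)
    calc ‖wd t‖ ≤ g t * ‖w t‖ := hwb t
      _ ≤ g t * M := mul_le_mul_of_nonneg_left (hM t) (hg0 t)
      _ = M * g t := mul_comm _ _
  have hftc : ∀ t : ℝ, (∫ s in (0:ℝ)..t, wd s) = w t - w 0 := fun t =>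
    intervalIntegral.integral_eq_sub_of_hasDerivAt (fun s _ => hw' s)
      (hwdcont.intervalIntegrable _ _)
  -- the limits at ±∞
  set αp : EuclideanSpace ℂ (Fin m) := w 0 + ∫ s in Set.Ioi (0:ℝ), wd s with hαpdef
  set αm : EuclideanSpace ℂ (Fin m) := w 0 - ∫ s in Set.Iic (0:ℝ), wd s with hαmdef
  have hwtop : Filter.Tendsto w Filter.atTop (nhds αp) := by
    have h1 : Filter.Tendsto (fun t => ∫ s in (0:ℝ)..t, wd s) Filter.atTop
        (nhds (∫ s in Set.Ioi (0:ℝ), wd s)) :=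
      intervalIntegral_tendsto_integral_Ioi 0 hwdint.integrableOn Filter.tendsto_id
    have h2 := h1.const_add (w 0)
    have h3 : (fun t => w 0 + ∫ s in (0:ℝ)..t, wd s) = w := by
      funext t
      rw [hftc t]
      abel
    rw [h3] at h2
    exact h2
  have hwbot : Filter.Tendsto w Filter.atBot (nhds αm) := by
    have h1 : Filter.Tendsto (fun a => ∫ s in a..(0:ℝ), wd s) Filter.atBot
        (nhds (∫ s in Set.Iic (0:ℝ), wd s)) :=
      intervalIntegral_tendsto_integral_Iic 0 hwdint.integrableOn Filter.tendsto_id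
    have h2 := (tendsto_const_nhds (x := w 0) (f := Filter.atBot (α := ℝ))).sub h1
    have h3 : (fun t => w 0 - ∫ s in t..(0:ℝ), wd s) = w := by
      funext t
      rw [intervalIntegral.integral_symm, hftc t]
      abel
    rw [h3] at h2
    exact h2
  set εp : ℝ → EuclideanSpace ℂ (Fin m) := fun t => w t - αp with hεpdef
  set εm : ℝ → EuclideanSpace ℂ (Fin m) := fun t => w t - αm with hεmdef
  have hsum_p : ∀ t, αp + εp t = w t := by
    intro t; simp only [hεpdef]; abel
  have hsum_m : ∀ t, αm + εm t = w t := by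
    intro t; simp only [hεmdef]; abel
  refine ⟨αp, αm, εp, εm, ?_, ?_, ?_, ?_, ?_, ?_⟩
  · intro t _
    rw [hsum_p t]
    exact (hABA t).symm
  · intro t _
    rw [hsum_m t]
    exact (hABA t).symm
  · have := hwtop.sub_const αp
    rw [sub_self] at this
    exact this
  · have := hwbot.sub_const αm
    rw [sub_self] at this
    exact this
  · intro t
    have h1 := (hw' t).sub_const αp
    rw [hsum_p t]
    exact h1
  · intro t
    have h1 := (hw' t).sub_const αm
    rw [hsum_m t]
    exact h1
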